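/- Let F be α-strongly convex and β-smooth with minimizer w*. Consider the inexact gradient descent update w⁺ = w - (1/β)(∇F(w) + e) with error vector e. Then F(w⁺) - F(w*) ≤ (1 - α/β)(F(w) - F(w*)) + (1/(2β))‖e‖². -/
import Mathlib


open scoped RealInnerProductSpace

/-- One inexact gradient descent step `w⁺ = w - (1/β)(∇F(w) + e)` on an `α`-strongly convex
and `β`-smooth function `F` satisfies
`F(w⁺) - F(w*) ≤ (1 - α/β)(F(w) - F(w*)) + (1/(2β))‖e‖²`. -/
theorem inexact_gradient_descent_contraction
    {d : ℕ} (F : EuclideanSpace ℝ (Fin d) → ℝ)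
    (F' : EuclideanSpace ℝ (Fin d) → EuclideanSpace ℝ (Fin d))
    (hgrad : ∀ x, HasGradientAt F (F' x) x)
    (α β : ℝ) (hα : 0 < α) (hβ : 0 < β) (hαβ : α ≤ β)
    (hsc : ∀ x y, F y ≥ F x + ⟪F' x, y - x⟫ + α / 2 * ‖y - x‖ ^ 2)
    (hsm : ∀ x y, F y ≤ F x + ⟪F' x, y - x⟫ + β / 2 * ‖y - x‖ ^ 2)
    (wstar : EuclideanSpace ℝ (Fin d)) (hmin : ∀ y, F wstar ≤ F y)
    (w e : EuclideanSpace ℝ (Fin d)) :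
    F (w - (1 / β) • (F' w + e)) - F wstar ≤
      (1 - α / β) * (F w - F wstar) + 1 / (2 * β) * ‖e‖ ^ 2 := by
  set g := F' w with hg
  set u := wstar - w with hu
  -- PL inequality from strong convexity
  have hcs : -(‖g‖ * ‖u‖) ≤ ⟪g, u⟫ := by
    have := abs_real_inner_le_norm g u
    have := neg_abs_le ⟪g, u⟫
    linarith
  have h2 := hsc w wstar
  rw [← hg, ← hu] at h2
  -- smoothness step
  have h1 := hsm w (w - (1 / β) • (g + e))
  have hdiff : w - (1 / β) • (g + e) - w = -((1 / β) • (g + e)) := by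
    abel
  rw [hdiff] at h1
  have hinner : ⟪g, -((1 / β) • (g + e))⟫ = -(1 / β) * (‖g‖ ^ 2 + ⟪g, e⟫) := by
    rw [inner_neg_right, real_inner_smul_right, inner_add_right,
      real_inner_self_eq_norm_sq]
    ring
  have hnorm : ‖-((1 / β) • (g + e))‖ ^ 2
      = (1 / β) ^ 2 * (‖g‖ ^ 2 + 2 * ⟪g, e⟫ + ‖e‖ ^ 2) := by
    rw [norm_neg, norm_smul, mul_pow, norm_add_sq_real]
    have : ‖(1 / β : ℝ)‖ = 1 / β := by
      rw [Real.norm_eq_abs, abs_of_pos (by positivity)]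
    rw [this]
  rw [hinner, hnorm] at h1
  -- combine
  have hβ' : (0 : ℝ) < 2 * β := by linarith
  have key : F (w - (1 / β) • (g + e)) ≤ F w - ‖g‖ ^ 2 / (2 * β) + ‖e‖ ^ 2 / (2 * β) := by
    have hβne : (β : ℝ) ≠ 0 := ne_of_gt hβ
    have : -(1 / β) * (‖g‖ ^ 2 + ⟪g, e⟫) + β / 2 * ((1 / β) ^ 2 * (‖g‖ ^ 2 + 2 * ⟪g, e⟫ + ‖e‖ ^ 2))
        = -(‖g‖ ^ 2 / (2 * β)) + ‖e‖ ^ 2 / (2 * β) := by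
      field_simp
      ring
    linarith [h1, this.symm.le]
  have hPL' : 2 * α * (F w - F wstar) ≤ ‖g‖ ^ 2 := by
    nlinarith [sq_nonneg (α * ‖u‖ - ‖g‖), hα.le, hcs, h2]
  have h3 : α / β * (F w - F wstar) ≤ ‖g‖ ^ 2 / (2 * β) := by
    rw [div_mul_eq_mul_div, div_le_div_iff₀ hβ hβ']
    nlinarith [hPL']
  have h4 : (1 - α / β) * (F w - F wstar) + 1 / (2 * β) * ‖e‖ ^ 2
      = (F w - F wstar) - α / β * (F w - F wstar) + ‖e‖ ^ 2 / (2 * β) := by ring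
  rw [h4]
  linarith [key, h3]
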